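/- (Theorem 5, part 2a.) Consider a compound geometrically uniform state set with geometrically uniform generators, where the two representations commute up to a phase factor: for all g ∈ G and k ∈ Q there exists θ(g,k) ∈ ℝ with ρ(g)τ(k) = e^{iθ(g,k)} τ(k)ρ(g). If the states φ_{g,k} = ρ(g)τ(k)φ are linearly independent, then there exists a single vector φ̄ ∈ ℂ^n such that for every (g,k), the column of Φ̃ = Φ(ΦᴴΦ)⁻¹ indexed by (g,k) equals ρ(g)τ(k)φ̄; that is, the reciprocal states form a compound geometrically uniform set with geometrically uniform generators τ(k)φ̄. -/

import Mathlib

open Matrix BigOperators ComplexOrder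

noncomputable section

/-- The matrix whose column indexed by `(g, k)` is the state `ρ(g) τ(k) φ`
(a CGU state set with GU generators). -/
def cguMatrix {G Q : Type*} [Group G] [Fintype G] [Group Q] [Fintype Q] (n : ℕ)
    (ρ : G →* Matrix.unitaryGroup (Fin n) ℂ) (τ : Q →* Matrix.unitaryGroup (Fin n) ℂ)
    (φ : Fin n → ℂ) : Matrix (Fin n) (G × Q) ℂ :=
  Matrix.of fun j gk =>
    (((ρ gk.1 : Matrix (Fin n) (Fin n) ℂ) * (τ gk.2 : Matrix (Fin n) (Fin n) ℂ)).mulVec φ) j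

theorem stmt_17 {G Q : Type*} [Group G] [Fintype G] [DecidableEq G]
    [Group Q] [Fintype Q] [DecidableEq Q] (n : ℕ)
    (ρ : G →* Matrix.unitaryGroup (Fin n) ℂ) (τ : Q →* Matrix.unitaryGroup (Fin n) ℂ)
    (φ : Fin n → ℂ)
    -- the representations commute up to a phase factor:
    (hcomm : ∀ (g : G) (k : Q), ∃ θ : ℝ,
      (ρ g : Matrix (Fin n) (Fin n) ℂ) * (τ k : Matrix (Fin n) (Fin n) ℂ) =
        Complex.exp (θ * Complex.I) •
          ((τ k : Matrix (Fin n) (Fin n) ℂ) * (ρ g : Matrix (Fin n) (Fin n) ℂ)))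
    -- the states are linearly independent:
    (hind : LinearIndependent ℂ (fun gk : G × Q =>
      ((ρ gk.1 : Matrix (Fin n) (Fin n) ℂ) * (τ gk.2 : Matrix (Fin n) (Fin n) ℂ)).mulVec φ)) :
    ∃ φbar : Fin n → ℂ, ∀ (g : G) (k : Q),
      (fun j : Fin n =>
          (cguMatrix n ρ τ φ *
            ((cguMatrix n ρ τ φ)ᴴ * cguMatrix n ρ τ φ)⁻¹) j (g, k)) =
        ((ρ g : Matrix (Fin n) (Fin n) ℂ) * (τ k : Matrix (Fin n) (Fin n) ℂ)).mulVec φbar := by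
  classical
  set Φ : Matrix (Fin n) (G × Q) ℂ := cguMatrix n ρ τ φ with hΦdef
  set A : Matrix (G × Q) (G × Q) ℂ := Φᴴ * Φ with hAdef
  have hΦinj : Function.Injective Φ.mulVec := by
    rw [Matrix.mulVec_injective_iff]
    exact hind
  have hA : A.PosDef := by
    refine Matrix.PosDef.of_dotProduct_mulVec_pos (Matrix.isHermitian_conjTranspose_mul_self _) fun x hx => ?_
    rw [← mulVec_mulVec, dotProduct_mulVec, vecMul_conjTranspose, star_star]
    refine dotProduct_star_self_pos_iff.mpr fun h => hx (hΦinj ?_)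
    simpa [Matrix.mulVec_zero] using h
  have hdet : IsUnit A.det := (Matrix.isUnit_iff_isUnit_det A).mp hA.isUnit
  have hAinv : A * A⁻¹ = 1 := Matrix.mul_nonsing_inv A hdet
  have hinvA : A⁻¹ * A = 1 := Matrix.nonsing_inv_mul A hdet
  refine ⟨fun j => (Φ * A⁻¹) j (1, 1), ?_⟩
  intro g k
  -- phases
  set θf : G → ℝ := fun a => Classical.choose (hcomm a k) with hθdef
  set c : G → ℂ := fun a =>
    if a = 1 then 1 else Complex.exp (-((θf a : ℝ) : ℂ) * Complex.I) with hcdef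
  have hc : ∀ a : G, (τ k : Matrix (Fin n) (Fin n) ℂ) * (ρ a : Matrix (Fin n) (Fin n) ℂ) =
      c a • ((ρ a : Matrix (Fin n) (Fin n) ℂ) * (τ k : Matrix (Fin n) (Fin n) ℂ)) := by
    intro a
    by_cases ha : a = 1
    · simp [hcdef, ha]
    · have hspec := Classical.choose_spec (hcomm a k)
      rw [hcdef]
      simp only [ha, if_neg, if_false]
      rw [hspec, smul_smul, ← Complex.exp_add]
      have : -((θf a : ℝ) : ℂ) * Complex.I + (θf a : ℝ) * Complex.I = 0 := by ring
      rw [this, Complex.exp_zero, one_smul]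
  have hcunit : ∀ a : G, (starRingEnd ℂ) (c a) * c a = 1 := by
    intro a
    by_cases ha : a = 1
    · simp [hcdef, ha]
    · rw [hcdef]
      simp only [ha, if_neg, if_false]
      rw [← Complex.exp_conj, ← Complex.exp_add]
      simp only [_root_.map_mul, map_neg, Complex.conj_I, Complex.conj_ofReal]
      have : -((θf a : ℝ) : ℂ) * -Complex.I + -((θf a : ℝ) : ℂ) * Complex.I = 0 := by ring
      rw [this, Complex.exp_zero]
  set U : Matrix (Fin n) (Fin n) ℂ :=
    (ρ g : Matrix (Fin n) (Fin n) ℂ) * (τ k : Matrix (Fin n) (Fin n) ℂ) with hUdef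
  have hUunit : Uᴴ * U = 1 := by
    have hmem : U ∈ Matrix.unitaryGroup (Fin n) ℂ := mul_mem (ρ g).2 (τ k).2
    simpa [Matrix.star_eq_conjTranspose] using hmem.1
  set M : Matrix (G × Q) (G × Q) ℂ :=
    Matrix.of (fun x y : G × Q => if x = (g * y.1, k * y.2) then c y.1 else 0) with hMdef
  -- key intertwining identity
  have hUΦ : U * Φ = Φ * M := by
    ext j y
    have hL : (U * Φ) j y
        = ((U * ((ρ y.1 : Matrix (Fin n) (Fin n) ℂ) * (τ y.2 : Matrix (Fin n) (Fin n) ℂ))).mulVec φ) j := by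
      rw [← Matrix.mulVec_mulVec]
      simp [Matrix.mul_apply, Matrix.mulVec, dotProduct, hΦdef, cguMatrix]
    have hfact : U * ((ρ y.1 : Matrix (Fin n) (Fin n) ℂ) * (τ y.2 : Matrix (Fin n) (Fin n) ℂ))
        = c y.1 • ((ρ (g * y.1) : Matrix (Fin n) (Fin n) ℂ) * (τ (k * y.2) : Matrix (Fin n) (Fin n) ℂ)) := by
      have h1 : (ρ (g * y.1) : Matrix (Fin n) (Fin n) ℂ)
          = (ρ g : Matrix (Fin n) (Fin n) ℂ) * (ρ y.1 : Matrix (Fin n) (Fin n) ℂ) := by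
        rw [_root_.map_mul]; rfl
      have h2 : (τ (k * y.2) : Matrix (Fin n) (Fin n) ℂ)
          = (τ k : Matrix (Fin n) (Fin n) ℂ) * (τ y.2 : Matrix (Fin n) (Fin n) ℂ) := by
        rw [_root_.map_mul]; rfl
      rw [hUdef, h1, h2]
      calc (ρ g : Matrix (Fin n) (Fin n) ℂ) * (τ k : Matrix (Fin n) (Fin n) ℂ)
            * ((ρ y.1 : Matrix (Fin n) (Fin n) ℂ) * (τ y.2 : Matrix (Fin n) (Fin n) ℂ))
          = (ρ g : Matrix (Fin n) (Fin n) ℂ)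
            * (((τ k : Matrix (Fin n) (Fin n) ℂ) * (ρ y.1 : Matrix (Fin n) (Fin n) ℂ))
              * (τ y.2 : Matrix (Fin n) (Fin n) ℂ)) := by
            simp only [mul_assoc]
        _ = (ρ g : Matrix (Fin n) (Fin n) ℂ)
            * ((c y.1 • ((ρ y.1 : Matrix (Fin n) (Fin n) ℂ) * (τ k : Matrix (Fin n) (Fin n) ℂ)))
              * (τ y.2 : Matrix (Fin n) (Fin n) ℂ)) := by rw [hc y.1]
        _ = c y.1 • ((ρ g : Matrix (Fin n) (Fin n) ℂ) * (ρ y.1 : Matrix (Fin n) (Fin n) ℂ)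
              * ((τ k : Matrix (Fin n) (Fin n) ℂ) * (τ y.2 : Matrix (Fin n) (Fin n) ℂ))) := by
            simp only [smul_mul_assoc, mul_smul_comm, mul_assoc]
    have hR : (Φ * M) j y = c y.1 * Φ j (g * y.1, k * y.2) := by
      simp only [Matrix.mul_apply, hMdef, Matrix.of_apply, mul_ite, mul_zero, mul_one]
      rw [Finset.sum_ite_eq' Finset.univ ((g * y.1, k * y.2) : G × Q) (fun x => Φ j x * c y.1)]
      simp [mul_comm]
    rw [hL, hR, hfact]
    simp [Matrix.smul_mulVec, hΦdef, cguMatrix]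
  -- M is unitary
  have hMunit : Mᴴ * M = 1 := by
    ext x y
    simp only [Matrix.mul_apply, Matrix.conjTranspose_apply, hMdef, Matrix.of_apply]
    rw [Finset.sum_eq_single ((g * y.1, k * y.2) : G × Q)]
    · by_cases hxy : x = y
      · subst hxy
        simp [hcunit x.1, Matrix.one_apply]
      · have : ¬ ((g * y.1, k * y.2) : G × Q) = (g * x.1, k * x.2) := by
          simp only [Prod.mk.injEq, mul_right_inj, not_and]
          intro h1 h2
          exact hxy (Prod.ext h1 h2).symm
        simp [this, Matrix.one_apply, hxy]
    · intro b _ hb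
      by_cases hbx : b = (g * x.1, k * x.2)
      · have : ¬ (b = (g * y.1, k * y.2)) := hb
        simp [this]
      · simp [hbx]
    · simp
  have hMMh : M * Mᴴ = 1 := mul_eq_one_comm.mp hMunit
  -- A commutes with M
  have hAM : A * M = M * A := by
    have h1 : Mᴴ * A * M = A := by
      calc Mᴴ * A * M = (Φ * M)ᴴ * (Φ * M) := by
            rw [Matrix.conjTranspose_mul, hAdef]
            rw [Matrix.mul_assoc, Matrix.mul_assoc, Matrix.mul_assoc]
        _ = (U * Φ)ᴴ * (U * Φ) := by rw [hUΦ]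
        _ = Φᴴ * (Uᴴ * U) * Φ := by
            rw [Matrix.conjTranspose_mul]
            simp only [hUdef, Matrix.mul_assoc]
        _ = A := by rw [hUunit, Matrix.mul_one, hAdef]
    calc A * M = (M * Mᴴ) * A * M := by rw [hMMh, Matrix.one_mul]
      _ = M * (Mᴴ * A * M) := by simp only [hAdef, Matrix.mul_assoc]
      _ = M * A := by rw [h1]
  -- A⁻¹ commutes with M
  have hAinvM : A⁻¹ * M = M * A⁻¹ := by
    calc A⁻¹ * M = A⁻¹ * M * (A * A⁻¹) := by rw [hAinv, Matrix.mul_one]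
      _ = A⁻¹ * (M * A) * A⁻¹ := by simp only [hAdef, Matrix.mul_assoc]
      _ = A⁻¹ * (A * M) * A⁻¹ := by rw [hAM]
      _ = (A⁻¹ * A) * (M * A⁻¹) := by simp only [Matrix.mul_assoc]
      _ = M * A⁻¹ := by rw [hinvA, Matrix.one_mul]
  -- conclude
  funext j
  have hcol : (U.mulVec fun l => (Φ * A⁻¹) l (1, 1)) j = (U * (Φ * A⁻¹)) j (1, 1) := by
    simp [Matrix.mul_apply, Matrix.mulVec, dotProduct]
  have hmain : U * (Φ * A⁻¹) = (Φ * A⁻¹) * M := by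
    calc U * (Φ * A⁻¹) = (U * Φ) * A⁻¹ := by simp only [hUdef, Matrix.mul_assoc]
      _ = Φ * (M * A⁻¹) := by rw [hUΦ, Matrix.mul_assoc]
      _ = Φ * (A⁻¹ * M) := by rw [hAinvM]
      _ = (Φ * A⁻¹) * M := by rw [Matrix.mul_assoc]
  have hone : ((Φ * A⁻¹) * M) j (1, 1) = (Φ * A⁻¹) j (g, k) := by
    conv_lhs => rw [Matrix.mul_apply]
    simp only [hMdef, Matrix.of_apply, mul_ite, mul_zero]
    rw [Finset.sum_ite_eq' Finset.univ ((g * (1:G), k * (1:Q)) : G × Q)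
      (fun x => (Φ * A⁻¹) j x * c 1)]
    simp [hcdef]
  show (Φ * A⁻¹) j (g, k) = U.mulVec (fun l => (Φ * A⁻¹) l (1, 1)) j
  rw [hcol, hmain, hone]
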